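/- Let (f_n)_{n≥0} be a Hardy martingale with values in a Hilbert space on Ω = 𝕋^ℕ with the coordinate filtration (i.e., f_n = E(f | A_n) and f_n depends analytically on the n-th coordinate Z_n). Then for any p > 0, the sequence (‖f_n‖^p)_{n≥0} is a submartingale. -/

import Mathlib

set_option linter.unusedSectionVars false
set_option linter.unusedVariables false
set_option maxHeartbeats 1000000

open MeasureTheory

instance : Fact (0 < 2 * Real.pi) := ⟨Real.two_pi_pos⟩

namespace HardyAux

open Complex AddCircle Polynomial Filter
open scoped Real ComplexConjugate Topology NNReal InnerProductSpace

variable {T : ℝ} [hT : Fact (0 < T)]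



lemma integrable_of_bound {X : Type*} [MeasurableSpace X] (μ : Measure X) [IsFiniteMeasure μ]
    {E : Type*} [NormedAddCommGroup E] (f : X → E) (C : ℝ)
    (hm : AEStronglyMeasurable f μ) (h : ∀ x, ‖f x‖ ≤ C) : Integrable f μ :=
  memLp_one_iff_integrable.mp (MemLp.of_bound hm C (Filter.Eventually.of_forall h))

lemma integral_fourier_eq_zero {n : ℤ} (hn : n ≠ 0) :
    ∫ z : AddCircle T, (fourier n z : ℂ) ∂haarAddCircle = 0 :=
  integral_eq_zero_of_add_right_eq_neg (fourier_add_half_inv_index hn hT.out)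

lemma fourier_pow (n : ℤ) (k : ℕ) (z : AddCircle T) :
    (fourier n z : ℂ) ^ k = fourier (n * k) z := by
  induction k with
  | zero => simp
  | succ k ih =>
    rw [pow_succ, ih, ← fourier_add]
    congr 1
    push_cast
    ring

lemma norm_fourier (n : ℤ) (z : AddCircle T) : ‖(fourier n z : ℂ)‖ = 1 :=
  Circle.norm_coe _

/-- average of `log ‖1 - β·eⁱⁿˣ‖` is zero for `‖β‖ < 1`. -/
lemma integral_log_one_sub_smul {β : ℂ} (hβ : ‖β‖ < 1) {n : ℤ} (hn : n ≠ 0) :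
    ∫ z : AddCircle T, Real.log ‖1 - β * fourier n z‖ ∂haarAddCircle = 0 := by
  set w : AddCircle T → ℂ := fun z => β * fourier n z with hw
  have hwnorm : ∀ z, ‖w z‖ < 1 := by
    intro z
    simp only [hw, norm_mul, norm_fourier, mul_one]
    exact hβ
  set G : ℕ → AddCircle T → ℝ := fun k z => (-((w z) ^ k / k)).re with hG
  have hsum : ∀ z : AddCircle T, HasSum (fun k => G k z) (Real.log ‖1 - w z‖) := by
    intro z
    have h1 := Complex.hasSum_taylorSeries_log (z := -(w z))
      (by rw [norm_neg]; exact hwnorm z)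
    have h2 := h1.mapL Complex.reCLM
    have hterm : ∀ k : ℕ, Complex.reCLM ((-1) ^ (k + 1) * (-(w z)) ^ k / k) = G k z := by
      intro k
      have h4 : ((-1 : ℂ)) ^ (k + 1) * (-(w z)) ^ k / k = -(w z ^ k / k) := by
        have h3 : ((-1 : ℂ)) ^ k * (-1) ^ k = 1 := by rw [← mul_pow]; norm_num
        rw [pow_succ, neg_pow]
        linear_combination (-(w z ^ k) / (k : ℂ)) * h3
      rw [h4]; rfl
    have hval : Complex.reCLM (Complex.log (1 + -(w z))) = Real.log ‖1 - w z‖ := by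
      rw [Complex.reCLM_apply, Complex.log_re]
      norm_num
      rfl
    rw [← hval]
    convert h2 using 1
    ext k
    exact (hterm k).symm
  have hGcont : ∀ k, Continuous fun z : AddCircle T => G k z := by
    intro k
    apply Complex.continuous_re.comp
    apply Continuous.neg
    apply Continuous.div_const
    exact ((continuous_const.mul (map_continuous (fourier n))).pow k)
  have hGbound : ∀ k z, ‖G k z‖ ≤ ‖β‖ ^ k := by
    intro k z
    calc ‖G k z‖ ≤ ‖(-((w z) ^ k / k) : ℂ)‖ := Complex.abs_re_le_norm _
    _ = ‖w z‖ ^ k / k := by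
        rw [norm_neg, norm_div, norm_pow]
        simp
    _ ≤ ‖w z‖ ^ k := by
        rcases Nat.eq_zero_or_pos k with rfl | hk
        · simp
        · apply div_le_self (by positivity)
          exact_mod_cast hk
    _ ≤ ‖β‖ ^ k := by
        apply pow_le_pow_left₀ (norm_nonneg _)
        simp only [hw, norm_mul, norm_fourier, mul_one, le_refl]
  have hswap : ∫ z, (∑' k, G k z) ∂(haarAddCircle : Measure (AddCircle T))
      = ∑' k, ∫ z, G k z ∂haarAddCircle := by
    apply integral_tsum
    · exact fun k => (hGcont k).aestronglyMeasurable
    · apply ne_of_lt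
      calc ∑' k, ∫⁻ z, ‖G k z‖₊ ∂(haarAddCircle : Measure (AddCircle T))
          ≤ ∑' k : ℕ, (ENNReal.ofReal ‖β‖) ^ k := by
            apply ENNReal.tsum_le_tsum
            intro k
            calc ∫⁻ z, ‖G k z‖₊ ∂(haarAddCircle : Measure (AddCircle T))
                ≤ ∫⁻ _, ENNReal.ofReal (‖β‖ ^ k) ∂(haarAddCircle : Measure (AddCircle T)) := by
                  apply lintegral_mono
                  intro z
                  show (‖G k z‖₊ : ENNReal) ≤ ENNReal.ofReal (‖β‖ ^ k)
                  rw [← ENNReal.ofReal_coe_nnreal, coe_nnnorm]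
                  exact ENNReal.ofReal_le_ofReal (hGbound k z)
              _ = ENNReal.ofReal (‖β‖ ^ k) := by simp
              _ = (ENNReal.ofReal ‖β‖) ^ k := (ENNReal.ofReal_pow (norm_nonneg _) k)
        _ < ⊤ := by
            rw [ENNReal.tsum_geometric]
            apply ENNReal.inv_lt_top.mpr
            rw [tsub_pos_iff_lt]
            exact_mod_cast ENNReal.ofReal_lt_one.mpr hβ
  have hintG : ∀ k, ∫ z, G k z ∂(haarAddCircle : Measure (AddCircle T)) = 0 := by
    intro k
    rcases Nat.eq_zero_or_pos k with rfl | hk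
    · simp [hG]
    · have hGeq : ∀ z, G k z = ((-(β ^ k / k)) * fourier (n * k) z).re := by
        intro z
        simp only [hG, hw]
        congr 1
        rw [mul_pow, fourier_pow]
        ring
      simp_rw [hGeq]
      have hint : Integrable (fun z : AddCircle T => (-(β ^ k / k)) * fourier (n * k) z)
          haarAddCircle := by
        apply integrable_of_bound _ _ (‖-(β ^ k / k)‖)
        · exact (continuous_const.mul (map_continuous (fourier (n * k)))).aestronglyMeasurable
        · intro z
          rw [norm_mul, norm_fourier, mul_one]
      have hre : (fun z : AddCircle T => ((-(β ^ k / k)) * fourier (n * k) z).re)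
          = fun z => Complex.reCLM ((-(β ^ k / k)) * fourier (n * k) z) := rfl
      rw [hre, ContinuousLinearMap.integral_comp_comm _ hint, integral_const_mul,
        integral_fourier_eq_zero (by positivity), mul_zero]
      simp
  calc ∫ z : AddCircle T, Real.log ‖1 - β * fourier n z‖ ∂haarAddCircle
      = ∫ z, (∑' k, G k z) ∂(haarAddCircle : Measure (AddCircle T)) := by
        apply integral_congr_ae
        apply Filter.Eventually.of_forall
        intro z
        exact ((hsum z).tsum_eq).symm
    _ = ∑' k, ∫ z, G k z ∂(haarAddCircle : Measure (AddCircle T)) := hswap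
    _ = 0 := by simp [hintG]






lemma continuous_log_norm_sub {α : ℂ} (hα : ‖α‖ ≠ 1) :
    Continuous fun z : AddCircle T => Real.log ‖(fourier 1 z : ℂ) - α‖ := by
  apply Continuous.log
  · exact (Continuous.sub (map_continuous (fourier 1)) continuous_const).norm
  · intro z
    rw [norm_ne_zero_iff, sub_ne_zero]
    intro h
    apply hα
    rw [← h, norm_fourier]

lemma integrable_log_norm_sub {α : ℂ} (hα : ‖α‖ ≠ 1) :
    Integrable (fun z : AddCircle T => Real.log ‖(fourier 1 z : ℂ) - α‖) haarAddCircle := by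
  have hc := continuous_log_norm_sub (T := T) hα
  obtain ⟨C, hC⟩ := (isCompact_univ (X := AddCircle T)).exists_bound_of_continuousOn
    hc.continuousOn
  exact integrable_of_bound _ _ C hc.aestronglyMeasurable fun x => by
    simpa using hC x trivial

lemma avg_log_norm_sub {α : ℂ} (hα : ‖α‖ ≠ 1) :
    ∫ z : AddCircle T, Real.log ‖(fourier 1 z : ℂ) - α‖ ∂haarAddCircle
      = Real.log (max ‖α‖ 1) := by
  rcases lt_or_gt_of_ne hα with hlt | hgt
  · -- ‖α‖ < 1 : ‖f - α‖ = ‖1 - α * fourier (-1) z‖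
    have key : ∀ z : AddCircle T, ‖(fourier 1 z : ℂ) - α‖ = ‖1 - α * fourier (-1) z‖ := by
      intro z
      have h1 : (fourier 1 z : ℂ) * fourier (-1) z = 1 := by
        rw [← fourier_add]
        norm_num
      have : (fourier 1 z : ℂ) - α = fourier 1 z * (1 - α * fourier (-1) z) := by
        rw [mul_sub, mul_one, ← mul_assoc, mul_comm (fourier 1 z : ℂ) α, mul_assoc, h1, mul_one]
      rw [this, norm_mul, norm_fourier, one_mul]
    simp_rw [key]
    rw [integral_log_one_sub_smul hlt (by norm_num : (-1 : ℤ) ≠ 0)]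
    rw [max_eq_right hlt.le, Real.log_one]
  · -- ‖α‖ > 1
    have hα0 : α ≠ 0 := by
      intro h; rw [h, norm_zero] at hgt; linarith
    have hinv : ‖α⁻¹‖ < 1 := by
      rw [norm_inv]
      rw [inv_lt_one_iff₀]
      right; exact hgt
    have key : ∀ z : AddCircle T, Real.log ‖(fourier 1 z : ℂ) - α‖
        = Real.log ‖α‖ + Real.log ‖1 - α⁻¹ * fourier 1 z‖ := by
      intro z
      have : (fourier 1 z : ℂ) - α = (-α) * (1 - α⁻¹ * fourier 1 z) := by
        field_simp
        ring
      rw [this, norm_mul, norm_neg, Real.log_mul (by positivity) ?_]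
      · rw [norm_ne_zero_iff, sub_ne_zero]
        intro h
        have h2 : ‖α⁻¹ * (fourier 1 z : ℂ)‖ = ‖α⁻¹‖ := by
          rw [norm_mul, norm_fourier, mul_one]
        rw [← h, norm_one] at h2
        rw [← h2] at hinv
        exact lt_irrefl _ hinv
    simp_rw [key]
    rw [integral_add (integrable_const _) ?_]
    · rw [integral_const, probReal_univ, smul_eq_mul, one_mul,
        integral_log_one_sub_smul hinv (by norm_num : (1 : ℤ) ≠ 0), add_zero,
        max_eq_left hgt.le]
    · have hc : Continuous fun z : AddCircle T => Real.log ‖1 - α⁻¹ * fourier 1 z‖ := by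
        apply Continuous.log
        · exact (continuous_const.sub (continuous_const.mul
            (map_continuous (fourier 1)))).norm
        · intro z
          rw [norm_ne_zero_iff, sub_ne_zero]
          intro h
          have h2 : ‖α⁻¹ * (fourier 1 z : ℂ)‖ < 1 := by
            rw [norm_mul, norm_fourier, mul_one]; exact hinv
          rw [← h] at h2; simp at h2
      obtain ⟨C, hC⟩ := (isCompact_univ (X := AddCircle T)).exists_bound_of_continuousOn
        hc.continuousOn
      exact integrable_of_bound _ _ C hc.aestronglyMeasurable fun x => by
        simpa using hC x trivial





lemma multiset_norm_prod (M : Multiset ℂ) : ‖M.prod‖ = (M.map fun x => ‖x‖).prod := by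
  induction M using Multiset.induction with
  | empty => simp
  | cons a s ih => simp [norm_mul, ih]

lemma multiset_log_prod (M : Multiset ℝ) : (∀ x ∈ M, x ≠ 0) →
    Real.log M.prod = (M.map Real.log).sum := by
  induction M using Multiset.induction with
  | empty => intro _; simp
  | cons a s ih =>
    intro h
    simp only [Multiset.prod_cons, Multiset.map_cons, Multiset.sum_cons]
    rw [Real.log_mul (h a (Multiset.mem_cons_self a s))
      (Multiset.prod_ne_zero fun h0 => h 0 (Multiset.mem_cons_of_mem h0) rfl),
      ih fun x hx => h x (Multiset.mem_cons_of_mem hx)]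

lemma multiset_sum_le_sum {α : Type*} (M : Multiset α) (f g : α → ℝ) :
    (∀ x ∈ M, f x ≤ g x) → (M.map f).sum ≤ (M.map g).sum := by
  induction M using Multiset.induction with
  | empty => intro _; simp
  | cons a s ih =>
    intro h
    simp only [Multiset.map_cons, Multiset.sum_cons]
    exact add_le_add (h a (Multiset.mem_cons_self a s))
      (ih fun x hx => h x (Multiset.mem_cons_of_mem hx))

lemma integrable_multiset_log_sum (M : Multiset ℂ) (hM : ∀ a ∈ M, ‖a‖ ≠ 1) :
    Integrable (fun z : AddCircle T =>
      (M.map fun a => Real.log ‖(fourier 1 z : ℂ) - a‖).sum) haarAddCircle := by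
  induction M using Multiset.induction with
  | empty => simpa using integrable_const (0 : ℝ)
  | cons b s ih =>
    simp only [Multiset.map_cons, Multiset.sum_cons]
    exact (integrable_log_norm_sub (hM b (Multiset.mem_cons_self b s))).add
      (ih fun a ha => hM a (Multiset.mem_cons_of_mem ha))

lemma integral_multiset_log_sum (M : Multiset ℂ) (hM : ∀ a ∈ M, ‖a‖ ≠ 1) :
    ∫ z : AddCircle T, (M.map fun a => Real.log ‖(fourier 1 z : ℂ) - a‖).sum ∂haarAddCircle
      = (M.map fun a => Real.log (max ‖a‖ 1)).sum := by
  induction M using Multiset.induction with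
  | empty => simp
  | cons b s ih =>
    have hb := hM b (Multiset.mem_cons_self b s)
    have hs : ∀ a ∈ s, ‖a‖ ≠ 1 := fun a ha => hM a (Multiset.mem_cons_of_mem ha)
    simp only [Multiset.map_cons, Multiset.sum_cons]
    rw [integral_add (integrable_log_norm_sub hb) (integrable_multiset_log_sum s hs),
      avg_log_norm_sub hb, ih hs]

/-- Core inequality for polynomials with no roots on the unit circle. -/
lemma poly_ineq_off_circle (Q : Polynomial ℂ) (hQ0 : Q.eval 0 ≠ 0)
    (hroots : ∀ α ∈ Q.roots, ‖α‖ ≠ 1) {p : ℝ} (hp : 0 < p) :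
    ‖Q.eval 0‖ ^ p ≤ ∫ z : AddCircle T, ‖Q.eval (fourier 1 z)‖ ^ p ∂haarAddCircle := by
  have hQ : Q ≠ 0 := fun h => hQ0 (by simp [h])
  have hc : Q.leadingCoeff ≠ 0 := Polynomial.leadingCoeff_ne_zero.mpr hQ
  set c := Q.leadingCoeff with hcdef
  have hsplit : Q = C c * (Q.roots.map fun a => X - C a).prod :=
    (IsAlgClosed.splits Q).eq_prod_roots
  have heval : ∀ w : ℂ, Q.eval w = c * (Q.roots.map fun a => w - a).prod := by
    intro w
    conv_lhs => rw [hsplit]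
    rw [Polynomial.eval_mul, Polynomial.eval_C, Polynomial.eval_multiset_prod,
      Multiset.map_map]
    congr 2
    ext a
    simp
  have hnorm : ∀ w : ℂ, ‖Q.eval w‖ = ‖c‖ * (Q.roots.map fun a => ‖w - a‖).prod := by
    intro w
    rw [heval, norm_mul, multiset_norm_prod, Multiset.map_map]
    rfl
  have hfactor_ne : ∀ (z : AddCircle T), ∀ a ∈ Q.roots, (fourier 1 z : ℂ) - a ≠ 0 := by
    intro z a ha h
    apply hroots a ha
    rw [← sub_eq_zero.mp h, norm_fourier]
  have hQcirc : ∀ z : AddCircle T, Q.eval (fourier 1 z) ≠ 0 := by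
    intro z
    rw [heval]
    apply mul_ne_zero hc
    apply Multiset.prod_ne_zero
    intro h0
    obtain ⟨a, ha, ha0⟩ := Multiset.mem_map.mp h0
    exact hfactor_ne z a ha ha0
  have hQpos : ∀ z : AddCircle T, 0 < ‖Q.eval (fourier 1 z)‖ :=
    fun z => norm_pos_iff.mpr (hQcirc z)
  -- decomposition of the log on the circle
  have hlog : ∀ z : AddCircle T, Real.log ‖Q.eval (fourier 1 z)‖
      = Real.log ‖c‖ + (Q.roots.map fun a => Real.log ‖(fourier 1 z : ℂ) - a‖).sum := by
    intro z
    rw [hnorm, Real.log_mul (by simpa using hc) ?prodne, multiset_log_prod, Multiset.map_map]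
    · rfl
    · intro x hx
      obtain ⟨a, ha, rfl⟩ := Multiset.mem_map.mp hx
      exact norm_ne_zero_iff.mpr (hfactor_ne z a ha)
    case prodne =>
      apply Multiset.prod_ne_zero
      intro h0
      obtain ⟨a, ha, ha0⟩ := Multiset.mem_map.mp h0
      exact hfactor_ne z a ha (norm_eq_zero.mp ha0)
  -- the average of the log
  have havg : ∫ z : AddCircle T, Real.log ‖Q.eval (fourier 1 z)‖ ∂haarAddCircle
      = Real.log ‖c‖ + (Q.roots.map fun a => Real.log (max ‖a‖ 1)).sum := by
    calc ∫ z : AddCircle T, Real.log ‖Q.eval (fourier 1 z)‖ ∂haarAddCircle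
        = ∫ z : AddCircle T, (Real.log ‖c‖
            + (Q.roots.map fun a => Real.log ‖(fourier 1 z : ℂ) - a‖).sum) ∂haarAddCircle := by
          exact integral_congr_ae (Filter.Eventually.of_forall fun z => hlog z)
      _ = Real.log ‖c‖ + (Q.roots.map fun a => Real.log (max ‖a‖ 1)).sum := by
          rw [integral_add (integrable_const _) (integrable_multiset_log_sum Q.roots hroots),
            integral_const, probReal_univ, one_smul,
            integral_multiset_log_sum Q.roots hroots]
  -- lower bound on the average
  have hroots0 : ∀ a ∈ Q.roots, a ≠ 0 := by
    intro a ha h0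
    apply hQ0
    have := (Polynomial.mem_roots hQ).mp ha
    rw [h0] at this
    exact this
  have hlow : Real.log ‖Q.eval 0‖
      ≤ ∫ z : AddCircle T, Real.log ‖Q.eval (fourier 1 z)‖ ∂haarAddCircle := by
    rw [havg]
    have h0eval : Real.log ‖Q.eval 0‖
        = Real.log ‖c‖ + (Q.roots.map fun a => Real.log ‖a‖).sum := by
      rw [hnorm, Real.log_mul (by simpa using hc) ?prodne2, multiset_log_prod, Multiset.map_map]
      · congr 2
        ext a
        simp
      · intro x hx
        obtain ⟨a, ha, rfl⟩ := Multiset.mem_map.mp hx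
        simpa using hroots0 a ha
      case prodne2 =>
        apply Multiset.prod_ne_zero
        intro h0
        obtain ⟨a, ha, ha0⟩ := Multiset.mem_map.mp h0
        rw [zero_sub, norm_neg, norm_eq_zero] at ha0
        exact hroots0 a ha ha0
    rw [h0eval]
    apply add_le_add_right
    apply multiset_sum_le_sum
    intro a ha
    apply Real.log_le_log (norm_pos_iff.mpr (hroots0 a ha)) (le_max_left _ _)
  -- Jensen with exp
  have hFcont : Continuous fun z : AddCircle T => Real.log ‖Q.eval (fourier 1 z)‖ := by
    apply Continuous.log
    · exact (Continuous.comp (Polynomial.continuous Q) (map_continuous (fourier 1))).norm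
    · exact fun z => (hQpos z).ne'
  have hFint : Integrable (fun z : AddCircle T => p * Real.log ‖Q.eval (fourier 1 z)‖)
      haarAddCircle := by
    have hc2 : Continuous fun z : AddCircle T => p * Real.log ‖Q.eval (fourier 1 z)‖ :=
      continuous_const.mul hFcont
    obtain ⟨C, hC⟩ := (isCompact_univ (X := AddCircle T)).exists_bound_of_continuousOn
      hc2.continuousOn
    exact integrable_of_bound _ _ C hc2.aestronglyMeasurable fun x => by simpa using hC x trivial
  have hGint : Integrable
      (fun z : AddCircle T => Real.exp (p * Real.log ‖Q.eval (fourier 1 z)‖)) haarAddCircle := by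
    have hc2 : Continuous fun z : AddCircle T =>
        Real.exp (p * Real.log ‖Q.eval (fourier 1 z)‖) :=
      Real.continuous_exp.comp (continuous_const.mul hFcont)
    obtain ⟨C, hC⟩ := (isCompact_univ (X := AddCircle T)).exists_bound_of_continuousOn
      hc2.continuousOn
    exact integrable_of_bound _ _ C hc2.aestronglyMeasurable fun x => by simpa using hC x trivial
  have hJensen := convexOn_exp.map_integral_le (μ := (haarAddCircle : Measure (AddCircle T)))
    (f := fun z => p * Real.log ‖Q.eval (fourier 1 z)‖)
    Real.continuous_exp.continuousOn isClosed_univ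
    (Filter.Eventually.of_forall fun z => Set.mem_univ _) hFint (by exact hGint)
  have hexp : ∀ z : AddCircle T, Real.exp (p * Real.log ‖Q.eval (fourier 1 z)‖)
      = ‖Q.eval (fourier 1 z)‖ ^ p := by
    intro z
    rw [Real.rpow_def_of_pos (hQpos z), mul_comm]
  calc ‖Q.eval 0‖ ^ p = Real.exp (p * Real.log ‖Q.eval 0‖) := by
        rw [Real.rpow_def_of_pos (norm_pos_iff.mpr hQ0), mul_comm]
    _ ≤ Real.exp (p * ∫ z : AddCircle T, Real.log ‖Q.eval (fourier 1 z)‖ ∂haarAddCircle) := by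
        apply Real.exp_le_exp.mpr
        exact mul_le_mul_of_nonneg_left hlow hp.le
    _ = Real.exp (∫ z : AddCircle T, p * Real.log ‖Q.eval (fourier 1 z)‖ ∂haarAddCircle) := by
        rw [integral_const_mul]
    _ ≤ ∫ z : AddCircle T, Real.exp (p * Real.log ‖Q.eval (fourier 1 z)‖) ∂haarAddCircle :=
        hJensen
    _ = ∫ z : AddCircle T, ‖Q.eval (fourier 1 z)‖ ^ p ∂haarAddCircle := by
        exact integral_congr_ae (Filter.Eventually.of_forall fun z => hexp z)





lemma poly_ineq (Q : Polynomial ℂ) {p : ℝ} (hp : 0 < p) :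
    ‖Q.eval 0‖ ^ p ≤ ∫ z : AddCircle T, ‖Q.eval (fourier 1 z)‖ ^ p ∂haarAddCircle := by
  rcases eq_or_ne (Q.eval 0) 0 with h0 | h0
  · rw [h0, norm_zero, Real.zero_rpow hp.ne']
    exact integral_nonneg fun z => Real.rpow_nonneg (norm_nonneg _) p
  have hQ : Q ≠ 0 := fun h => h0 (by simp [h])
  classical
  set S : Finset ℝ := (Q.roots.map fun a => ‖a‖).toFinset with hS
  have hchoice : ∀ k : ℕ, ∃ rr : ℝ, rr ∈ Set.Ioo (1:ℝ) (1 + 1 / ((k:ℝ) + 1)) ∧ rr ∉ S := by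
    intro k
    have hlt : (1 : ℝ) < 1 + 1 / (k + 1) := by
      have : (0 : ℝ) < 1 / (k + 1) := by positivity
      linarith
    obtain ⟨rr, hrr, hrrS⟩ := (Set.Ioo_infinite hlt).exists_notMem_finset S
    exact ⟨rr, hrr, hrrS⟩
  choose r hr hrS using hchoice
  have hr1 : ∀ k, 1 < r k := fun k => (hr k).1
  have hrle : ∀ k, r k ≤ 2 := by
    intro k
    have h2 := (hr k).2
    have : 1 / ((k : ℝ) + 1) ≤ 1 := by
      rw [div_le_one (by positivity)]
      simp
    linarith
  have hrtend : Tendsto r atTop (𝓝 1) := by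
    have hupper : Tendsto (fun k : ℕ => 1 + 1 / ((k : ℝ) + 1)) atTop (𝓝 1) := by
      have h1 : Tendsto (fun n : ℕ => 1 / ((n : ℝ) + 1)) atTop (𝓝 0) :=
        tendsto_one_div_add_atTop_nhds_zero_nat
      have h2 := (tendsto_const_nhds :
        Tendsto (fun _ : ℕ => (1 : ℝ)) atTop (𝓝 1)).add h1
      simpa using h2
    exact tendsto_of_tendsto_of_tendsto_of_le_of_le tendsto_const_nhds hupper
      (fun k => (hr1 k).le) (fun k => (hr k).2.le)
  -- the key inequality for each k
  have hkey : ∀ k : ℕ, ‖Q.eval 0‖ ^ p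
      ≤ ∫ z : AddCircle T, ‖Q.eval (((r k : ℝ) : ℂ) * fourier 1 z)‖ ^ p ∂haarAddCircle := by
    intro k
    set Qk := Q.comp (Polynomial.C ((r k : ℝ) : ℂ) * Polynomial.X) with hQk
    have hQkeval : ∀ w : ℂ, Qk.eval w = Q.eval (((r k : ℝ) : ℂ) * w) := by
      intro w
      simp [hQk, Polynomial.eval_comp]
    have hQk0 : Qk.eval 0 = Q.eval 0 := by rw [hQkeval]; simp
    have hroots : ∀ α ∈ Qk.roots, ‖α‖ ≠ 1 := by
      intro α hα hn
      have hQkne : Qk ≠ 0 := by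
        intro h
        rw [h] at hQk0
        simp at hQk0
        exact h0 hQk0.symm
      have hroot : Qk.eval α = 0 := (Polynomial.mem_roots hQkne).mp hα
      rw [hQkeval] at hroot
      have hmem : ((r k : ℝ) : ℂ) * α ∈ Q.roots := (Polynomial.mem_roots hQ).mpr hroot
      have hnorm : ‖((r k : ℝ) : ℂ) * α‖ = r k := by
        rw [norm_mul, hn, mul_one, Complex.norm_real, Real.norm_eq_abs,
          abs_of_pos (lt_trans one_pos (hr1 k))]
      apply hrS k
      rw [hS]
      apply Multiset.mem_toFinset.mpr
      rw [← hnorm]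
      exact Multiset.mem_map_of_mem _ hmem
    have h1 := poly_ineq_off_circle (T := T) Qk (by rw [hQk0]; exact h0) hroots hp
    rw [hQk0] at h1
    calc ‖Q.eval 0‖ ^ p ≤ ∫ z : AddCircle T, ‖Qk.eval (fourier 1 z)‖ ^ p ∂haarAddCircle := h1
      _ = ∫ z : AddCircle T, ‖Q.eval (((r k : ℝ) : ℂ) * fourier 1 z)‖ ^ p ∂haarAddCircle := by
          apply integral_congr_ae
          apply Filter.Eventually.of_forall
          intro z
          simp only [hQkeval]
  -- dominated convergence
  set C0 : ℝ := ∑ i ∈ Finset.range (Q.natDegree + 1), ‖Q.coeff i‖ * 2 ^ i with hC0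
  have hbound : ∀ w : ℂ, ‖w‖ ≤ 2 → ‖Q.eval w‖ ≤ C0 := by
    intro w hw
    rw [Polynomial.eval_eq_sum_range]
    apply (norm_sum_le _ _).trans
    apply Finset.sum_le_sum
    intro i _
    rw [norm_mul, norm_pow]
    exact mul_le_mul_of_nonneg_left (pow_le_pow_left₀ (norm_nonneg w) hw i) (norm_nonneg _)
  have hC0nonneg : 0 ≤ C0 := by
    apply Finset.sum_nonneg
    intro i _
    positivity
  have htendI : Tendsto
      (fun k => ∫ z : AddCircle T, ‖Q.eval (((r k : ℝ) : ℂ) * fourier 1 z)‖ ^ p ∂haarAddCircle)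
      atTop (𝓝 (∫ z : AddCircle T, ‖Q.eval (fourier 1 z)‖ ^ p ∂haarAddCircle)) := by
    apply tendsto_integral_of_dominated_convergence (bound := fun _ => C0 ^ p)
    · intro k
      apply Continuous.aestronglyMeasurable
      have hcont : Continuous fun z : AddCircle T =>
          ‖Q.eval (((r k : ℝ) : ℂ) * fourier 1 z)‖ :=
        ((Q.continuous).comp (continuous_const.mul (map_continuous (fourier 1)))).norm
      apply continuous_iff_continuousAt.mpr
      intro z
      exact (Real.continuousAt_rpow_const _ p (Or.inr hp.le)).comp hcont.continuousAt
    · exact integrable_const _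
    · intro k
      apply Filter.Eventually.of_forall
      intro z
      rw [Real.norm_eq_abs, _root_.abs_of_nonneg (Real.rpow_nonneg (norm_nonneg _) p)]
      apply Real.rpow_le_rpow (norm_nonneg _) ?_ hp.le
      apply hbound
      rw [norm_mul, norm_fourier, mul_one, Complex.norm_real, Real.norm_eq_abs,
        abs_of_pos (lt_trans one_pos (hr1 k))]
      exact hrle k
    · apply Filter.Eventually.of_forall
      intro z
      have t1 : Tendsto (fun k => ((r k : ℝ) : ℂ)) atTop (𝓝 1) := by
        have := (Complex.continuous_ofReal.tendsto 1).comp hrtend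
        exact this
      have t2 : Tendsto (fun k => ((r k : ℝ) : ℂ) * fourier 1 z) atTop (𝓝 (fourier 1 z)) := by
        have := t1.mul (tendsto_const_nhds (x := (fourier 1 z : ℂ)))
        simpa using this
      have t3 : Tendsto (fun k => ‖Q.eval (((r k : ℝ) : ℂ) * fourier 1 z)‖) atTop
          (𝓝 ‖Q.eval (fourier 1 z)‖) :=
        ((Q.continuous.tendsto _).comp t2).norm
      exact ((Real.continuousAt_rpow_const _ p (Or.inr hp.le)).tendsto.comp t3)
  exact ge_of_tendsto' htendI hkey





lemma continuous_rpow_const {q : ℝ} (hq : 0 < q) : Continuous fun x : ℝ => x ^ q :=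
  continuous_iff_continuousAt.mpr fun x => Real.continuousAt_rpow_const _ _ (Or.inr hq.le)

lemma rpow_add_le {a b : ℝ} (ha : 0 ≤ a) (hb : 0 ≤ b) {p : ℝ} (hp : 0 ≤ p) (hp1 : p ≤ 1) :
    (a + b) ^ p ≤ a ^ p + b ^ p := by
  have key := NNReal.rpow_add_le_add_rpow a.toNNReal b.toNNReal hp hp1
  have h2 := NNReal.coe_le_coe.mpr key
  push_cast at h2
  rwa [Real.coe_toNNReal _ ha, Real.coe_toNNReal _ hb] at h2

lemma integral_norm_sq_eq {X : Type*} [MeasurableSpace X] {μ : Measure X} (g : Lp ℂ 2 μ) :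
    ∫ x, ‖g x‖ ^ 2 ∂μ = ‖g‖ ^ 2 := by
  have H₃ := congr_arg RCLike.re (@L2.inner_def X ℂ ℂ _ _ _ _ _ g g)
  rw [← integral_re (L2.integrable_inner g g)] at H₃
  simp only [inner_self_eq_norm_sq] at H₃
  exact H₃.symm

lemma coeFn_finset_sum {X : Type*} [MeasurableSpace X] {μ : Measure X} {ι : Type*}
    (s : Finset ι) (F : ι → Lp ℂ 2 μ) (G : ι → X → ℂ) (h : ∀ i ∈ s, F i =ᵐ[μ] G i) :
    (↑(∑ i ∈ s, F i) : X → ℂ) =ᵐ[μ] fun x => ∑ i ∈ s, G i x := by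
  classical
  induction s using Finset.induction_on with
  | empty => simpa [Pi.zero_def] using Lp.coeFn_zero ℂ 2 μ
  | insert _ _ hnm ih =>
    rename_i a s'
    rw [Finset.sum_insert hnm]
    refine (Lp.coeFn_add _ _).trans ?_
    have h1 := h a (Finset.mem_insert_self a s')
    have h2 := ih fun i hi => h i (Finset.mem_insert_of_mem hi)
    filter_upwards [h1, h2] with x hx1 hx2
    simp only [Pi.add_apply, hx1, hx2]
    rw [Finset.sum_insert hnm]

/-- The scalar Hardy-space inequality for `0 < p ≤ 1`. -/
lemma scalar_hardy (h : AddCircle T → ℂ) (hmeas : AEStronglyMeasurable h haarAddCircle)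
    (B : ℝ) (hbdd : ∀ z, ‖h z‖ ≤ B)
    (hanal : ∀ k : ℤ, k < 0 → fourierCoeff h k = 0)
    {p : ℝ} (hp : 0 < p) (hp1 : p ≤ 1) :
    ‖∫ z, h z ∂(haarAddCircle : Measure (AddCircle T))‖ ^ p
      ≤ ∫ z : AddCircle T, ‖h z‖ ^ p ∂haarAddCircle := by
  classical
  have hB0 : 0 ≤ B := le_trans (norm_nonneg _) (hbdd 0)
  have hmem : MemLp h 2 (haarAddCircle : Measure (AddCircle T)) :=
    MemLp.of_bound hmeas B (Filter.Eventually.of_forall hbdd)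
  set hL : Lp ℂ 2 (haarAddCircle : Measure (AddCircle T)) := hmem.toLp h with hhL
  have hcoeff_eq : ∀ k : ℤ, fourierCoeff (↑hL : AddCircle T → ℂ) k = fourierCoeff h k := by
    intro k
    unfold fourierCoeff
    apply integral_congr_ae
    filter_upwards [hmem.coeFn_toLp] with z hz
    rw [hz]
  -- measurability and integrability facts
  have hrp : Continuous fun x : ℝ => x ^ p := continuous_rpow_const hp
  have Ih : Integrable (fun z : AddCircle T => ‖h z‖ ^ p) haarAddCircle := by
    apply integrable_of_bound _ _ (B ^ p)
    · exact hrp.comp_aestronglyMeasurable hmeas.norm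
    · intro z
      rw [Real.norm_eq_abs, _root_.abs_of_nonneg (Real.rpow_nonneg (norm_nonneg _) p)]
      exact Real.rpow_le_rpow (norm_nonneg _) (hbdd z) hp.le
  -- main estimate with ε
  apply le_of_forall_pos_le_add
  intro ε hε
  set δ : ℝ := ε ^ (1 / p) with hδdef
  have hδ : 0 < δ := Real.rpow_pos_of_pos hε _
  have hδp : δ ^ p = ε := by
    rw [hδdef, ← Real.rpow_mul hε.le, one_div, inv_mul_cancel₀ hp.ne', Real.rpow_one]
  -- Fourier series L² approximation
  have hsum := hasSum_fourier_series_L2 hL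
  have hev : ∀ᶠ sf : Finset ℤ in atTop,
      (∑ i ∈ sf, fourierCoeff (↑hL : AddCircle T → ℂ) i • fourierLp 2 i)
        ∈ Metric.ball hL δ := hsum.eventually_mem (Metric.ball_mem_nhds hL hδ)
  obtain ⟨s₀, hs₀⟩ := Filter.eventually_atTop.mp hev
  set c : ℤ → ℂ := fun i => fourierCoeff h i with hc
  set s : Finset ℤ := insert (0 : ℤ) s₀ with hsdef
  have hsball := hs₀ s (Finset.subset_insert 0 s₀)
  rw [Metric.mem_ball, dist_eq_norm] at hsball
  simp only [hcoeff_eq] at hsball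
  set t : Finset ℤ := s.filter (fun i => 0 ≤ i) with ht
  have hfilter : ∑ i ∈ t, c i • fourierLp 2 i
      = ∑ i ∈ s, c i • fourierLp (T := T) 2 i := by
    apply Finset.sum_filter_of_ne
    intro x _ hne
    by_contra hneg
    push_neg at hneg
    apply hne
    rw [show c x = 0 from hanal x hneg, zero_smul]
  have hs2 : ‖(∑ i ∈ t, c i • fourierLp (T := T) 2 i) - hL‖ < δ := by
    rw [hfilter]
    exact hsball
  set P : AddCircle T → ℂ := fun z => ∑ i ∈ t, c i * (fourier i z : ℂ) with hP
  have hPL : (↑(∑ i ∈ t, c i • fourierLp (T := T) 2 i) : AddCircle T → ℂ)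
      =ᵐ[(haarAddCircle : Measure (AddCircle T))] P := by
    apply coeFn_finset_sum t _ _
    intro i _
    refine (Lp.coeFn_smul (c i) (fourierLp 2 i)).trans ?_
    filter_upwards [coeFn_fourierLp (T := T) 2 i] with z hz
    rw [Pi.smul_apply, hz, smul_eq_mul]
  have hdiff : (↑((∑ i ∈ t, c i • fourierLp (T := T) 2 i) - hL) : AddCircle T → ℂ)
      =ᵐ[(haarAddCircle : Measure (AddCircle T))] fun z => P z - h z := by
    refine (Lp.coeFn_sub _ _).trans ?_
    filter_upwards [hPL, hmem.coeFn_toLp] with z h1 h2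
    simp only [Pi.sub_apply, h1, hhL, h2]
  have hL2 : ∫ z : AddCircle T, ‖P z - h z‖ ^ 2 ∂haarAddCircle
      = ‖(∑ i ∈ t, c i • fourierLp (T := T) 2 i) - hL‖ ^ 2 := by
    rw [← integral_norm_sq_eq ((∑ i ∈ t, c i • fourierLp (T := T) 2 i) - hL)]
    apply integral_congr_ae
    filter_upwards [hdiff] with z hz
    rw [hz]
  have hL2' : ∫ z : AddCircle T, ‖P z - h z‖ ^ 2 ∂haarAddCircle < δ ^ 2 := by
    rw [hL2]
    exact pow_lt_pow_left₀ hs2 (norm_nonneg _) two_ne_zero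
  -- the analytic polynomial
  set QQ : Polynomial ℂ := ∑ i ∈ t, Polynomial.C (c i) * Polynomial.X ^ (i.toNat) with hQQ
  have hQQeval : ∀ z : AddCircle T, QQ.eval (fourier 1 z) = P z := by
    intro z
    rw [hQQ, Polynomial.eval_finset_sum]
    apply Finset.sum_congr rfl
    intro i hi
    have hi0 : 0 ≤ i := (Finset.mem_filter.mp hi).2
    rw [Polynomial.eval_mul, Polynomial.eval_C, Polynomial.eval_pow, Polynomial.eval_X,
      fourier_pow]
    have hti : (1 * (i.toNat : ℤ)) = i := by omega
    rw [hti]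
  have h0t : (0 : ℤ) ∈ t := Finset.mem_filter.mpr ⟨Finset.mem_insert_self 0 s₀, le_refl 0⟩
  have hQQ0 : QQ.eval 0 = c 0 := by
    rw [hQQ, Polynomial.eval_finset_sum, Finset.sum_eq_single (0 : ℤ)]
    · simp
    · intro i hi hne
      have hi0 : 0 ≤ i := (Finset.mem_filter.mp hi).2
      have htn : i.toNat ≠ 0 := by omega
      simp [zero_pow htn]
    · intro habs
      exact absurd h0t habs
  have hc0 : c 0 = ∫ z, h z ∂(haarAddCircle : Measure (AddCircle T)) := by
    show fourierCoeff h 0 = _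
    unfold fourierCoeff
    simp
  -- bounds on P
  set BP : ℝ := ∑ i ∈ t, ‖c i‖ with hBP
  have hPbdd : ∀ z, ‖P z‖ ≤ BP := by
    intro z
    apply (norm_sum_le _ _).trans
    rw [hBP]
    apply Finset.sum_le_sum
    intro i _
    rw [norm_mul, norm_fourier, mul_one]
  have hPcont : Continuous P := by
    apply continuous_finset_sum
    intro i _
    exact continuous_const.mul (map_continuous (fourier i))
  have hPhmeas : AEStronglyMeasurable (fun z : AddCircle T => P z - h z) haarAddCircle :=
    hPcont.aestronglyMeasurable.sub hmeas
  have hPhbdd : ∀ z, ‖P z - h z‖ ≤ BP + B :=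
    fun z => (norm_sub_le _ _).trans (add_le_add (hPbdd z) (hbdd z))
  have IPh : Integrable (fun z : AddCircle T => ‖P z - h z‖ ^ p) haarAddCircle := by
    apply integrable_of_bound _ _ ((BP + B) ^ p)
    · exact hrp.comp_aestronglyMeasurable hPhmeas.norm
    · intro z
      rw [Real.norm_eq_abs, _root_.abs_of_nonneg (Real.rpow_nonneg (norm_nonneg _) p)]
      exact Real.rpow_le_rpow (norm_nonneg _) (hPhbdd z) hp.le
  have IP : Integrable (fun z : AddCircle T => ‖P z‖ ^ p) haarAddCircle := by
    apply integrable_of_bound _ _ (BP ^ p)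
    · exact hrp.comp_aestronglyMeasurable hPcont.aestronglyMeasurable.norm
    · intro z
      rw [Real.norm_eq_abs, _root_.abs_of_nonneg (Real.rpow_nonneg (norm_nonneg _) p)]
      exact Real.rpow_le_rpow (norm_nonneg _) (hPbdd z) hp.le
  -- Jensen's inequality : ∫ ‖P-h‖^p ≤ (∫ ‖P-h‖²)^(p/2) ≤ δ^p = ε
  have hIf : ∫ z : AddCircle T, ‖P z - h z‖ ^ p ∂haarAddCircle ≤ ε := by
    have h2p : (1 : ℝ) ≤ 2 / p := by
      rw [le_div_iff₀ hp]
      linarith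
    have hcollapse : ∀ z : AddCircle T, (‖P z - h z‖ ^ p) ^ ((2 : ℝ) / p)
        = ‖P z - h z‖ ^ 2 := by
      intro z
      rw [← Real.rpow_mul (norm_nonneg _)]
      rw [show p * (2 / p) = 2 by field_simp]
      rw [Real.rpow_two]
    have hcomp_int : Integrable
        ((fun x : ℝ => x ^ ((2 : ℝ) / p)) ∘ fun z : AddCircle T => ‖P z - h z‖ ^ p)
        haarAddCircle := by
      apply integrable_of_bound _ _ ((BP + B) ^ 2)
      · exact (continuous_rpow_const (by positivity)).comp_aestronglyMeasurable
          (hrp.comp_aestronglyMeasurable hPhmeas.norm)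
      · intro z
        show ‖(‖P z - h z‖ ^ p) ^ ((2:ℝ)/p)‖ ≤ (BP + B) ^ 2
        rw [hcollapse z, Real.norm_eq_abs, _root_.abs_of_nonneg (by positivity)]
        apply pow_le_pow_left₀ (norm_nonneg _) (hPhbdd z)
    have hJ := (convexOn_rpow (p := (2 : ℝ) / p) h2p).map_integral_le
      (μ := (haarAddCircle : Measure (AddCircle T)))
      (f := fun z : AddCircle T => ‖P z - h z‖ ^ p)
      (continuous_rpow_const (by positivity)).continuousOn isClosed_Ici
      (Filter.Eventually.of_forall fun z => Real.rpow_nonneg (norm_nonneg _) p)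
      IPh hcomp_int
    have hr1 : ∫ z : AddCircle T, (‖P z - h z‖ ^ p) ^ ((2 : ℝ) / p) ∂haarAddCircle
        = ∫ z : AddCircle T, ‖P z - h z‖ ^ 2 ∂haarAddCircle := by
      apply integral_congr_ae
      exact Filter.Eventually.of_forall fun z => hcollapse z
    have hInn : 0 ≤ ∫ z : AddCircle T, ‖P z - h z‖ ^ p ∂haarAddCircle :=
      integral_nonneg fun z => Real.rpow_nonneg (norm_nonneg _) p
    have h2' : (∫ z : AddCircle T, ‖P z - h z‖ ^ p ∂haarAddCircle) ^ ((2 : ℝ) / p)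
        ≤ δ ^ 2 := by
      exact (lt_of_le_of_lt (le_trans hJ (le_of_eq hr1)) hL2').le
    have hcollapse2 : ∫ z : AddCircle T, ‖P z - h z‖ ^ p ∂haarAddCircle
        = ((∫ z : AddCircle T, ‖P z - h z‖ ^ p ∂haarAddCircle) ^ ((2 : ℝ) / p))
          ^ (p / 2) := by
      rw [← Real.rpow_mul hInn]
      rw [show (2 / p) * (p / 2) = 1 by field_simp]
      rw [Real.rpow_one]
    rw [hcollapse2]
    calc ((∫ z : AddCircle T, ‖P z - h z‖ ^ p ∂haarAddCircle) ^ ((2 : ℝ) / p)) ^ (p / 2)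
        ≤ (δ ^ 2) ^ (p / 2) := by
          apply Real.rpow_le_rpow (Real.rpow_nonneg hInn _) h2' (by positivity)
      _ = δ ^ p := by
          rw [← Real.rpow_two, ← Real.rpow_mul hδ.le]
          congr 1
          field_simp
      _ = ε := hδp
  -- final chain
  have hmain := poly_ineq (T := T) QQ hp
  calc ‖∫ z, h z ∂(haarAddCircle : Measure (AddCircle T))‖ ^ p
      = ‖QQ.eval 0‖ ^ p := by rw [hQQ0, hc0]
    _ ≤ ∫ z : AddCircle T, ‖QQ.eval (fourier 1 z)‖ ^ p ∂haarAddCircle := hmain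
    _ = ∫ z : AddCircle T, ‖P z‖ ^ p ∂haarAddCircle := by
        apply integral_congr_ae
        apply Filter.Eventually.of_forall
        intro z
        simp only [hQQeval]
    _ ≤ ∫ z : AddCircle T, (‖h z‖ ^ p + ‖P z - h z‖ ^ p) ∂haarAddCircle := by
        apply integral_mono IP (Ih.add IPh)
        intro z
        have hPz : P z = h z + (P z - h z) := by ring
        have h5 : ‖P z‖ ≤ ‖h z‖ + ‖P z - h z‖ := by
          have h6 := norm_add_le (h z) (P z - h z)
          rwa [← hPz] at h6
        calc ‖P z‖ ^ p ≤ (‖h z‖ + ‖P z - h z‖) ^ p :=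
              Real.rpow_le_rpow (norm_nonneg _) h5 hp.le
          _ ≤ ‖h z‖ ^ p + ‖P z - h z‖ ^ p :=
              rpow_add_le (norm_nonneg _) (norm_nonneg _) hp.le hp1
    _ = (∫ z : AddCircle T, ‖h z‖ ^ p ∂haarAddCircle)
        + ∫ z : AddCircle T, ‖P z - h z‖ ^ p ∂haarAddCircle := integral_add Ih IPh
    _ ≤ (∫ z : AddCircle T, ‖h z‖ ^ p ∂haarAddCircle) + ε := add_le_add_right hIf _






lemma hilbert_hardy {H : Type*} [NormedAddCommGroup H] [InnerProductSpace ℂ H] [CompleteSpace H]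
    (g : AddCircle T → H) (hmeas : AEStronglyMeasurable g haarAddCircle)
    (B : ℝ) (hbdd : ∀ z, ‖g z‖ ≤ B)
    (hanal : ∀ k : ℤ, k < 0 →
      ∫ z, (fourier (-k) z : ℂ) • g z ∂(haarAddCircle : Measure (AddCircle T)) = 0)
    {p : ℝ} (hp : 0 < p) :
    ‖∫ z, g z ∂(haarAddCircle : Measure (AddCircle T))‖ ^ p
      ≤ ∫ z : AddCircle T, ‖g z‖ ^ p ∂haarAddCircle := by
  have hB0 : 0 ≤ B := le_trans (norm_nonneg _) (hbdd 0)
  have hgint : Integrable g (haarAddCircle : Measure (AddCircle T)) :=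
    integrable_of_bound _ _ B hmeas hbdd
  have hrp : Continuous fun x : ℝ => x ^ p := continuous_rpow_const hp
  have Ig : Integrable (fun z : AddCircle T => ‖g z‖ ^ p) haarAddCircle := by
    apply integrable_of_bound _ _ (B ^ p)
    · exact hrp.comp_aestronglyMeasurable hmeas.norm
    · intro z
      rw [Real.norm_eq_abs, _root_.abs_of_nonneg (Real.rpow_nonneg (norm_nonneg _) p)]
      exact Real.rpow_le_rpow (norm_nonneg _) (hbdd z) hp.le
  rcases le_or_gt 1 p with hp1 | hp1
  · -- easy case `p ≥ 1`
    have h1 : ‖∫ z, g z ∂(haarAddCircle : Measure (AddCircle T))‖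
        ≤ ∫ z, ‖g z‖ ∂(haarAddCircle : Measure (AddCircle T)) :=
      norm_integral_le_integral_norm g
    have hJ := (convexOn_rpow (p := p) hp1).map_integral_le
      (μ := (haarAddCircle : Measure (AddCircle T)))
      (f := fun z : AddCircle T => ‖g z‖)
      (continuous_rpow_const hp).continuousOn isClosed_Ici
      (Filter.Eventually.of_forall fun z => norm_nonneg _) hgint.norm (by exact Ig)
    calc ‖∫ z, g z ∂(haarAddCircle : Measure (AddCircle T))‖ ^ p
        ≤ (∫ z, ‖g z‖ ∂(haarAddCircle : Measure (AddCircle T))) ^ p :=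
          Real.rpow_le_rpow (norm_nonneg _) h1 hp.le
      _ ≤ ∫ z : AddCircle T, ‖g z‖ ^ p ∂haarAddCircle := hJ
  · -- hard case `p < 1`
    rcases eq_or_ne (∫ z, g z ∂(haarAddCircle : Measure (AddCircle T))) 0 with h0 | h0
    · rw [h0, norm_zero, Real.zero_rpow hp.ne']
      exact integral_nonneg fun z => Real.rpow_nonneg (norm_nonneg _) p
    set I : H := ∫ z, g z ∂(haarAddCircle : Measure (AddCircle T)) with hI
    have hnormI : ‖I‖ ≠ 0 := norm_ne_zero_iff.mpr h0
    set e : H := ((‖I‖ : ℂ))⁻¹ • I with he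
    have hnorme : ‖e‖ = 1 := by
      rw [he, norm_smul, norm_inv, Complex.norm_real, Real.norm_eq_abs,
        _root_.abs_of_nonneg (norm_nonneg I), inv_mul_cancel₀ hnormI]
    set h : AddCircle T → ℂ := fun z => (inner ℂ e (g z) : ℂ) with hh
    have hmeas_h : AEStronglyMeasurable h haarAddCircle :=
      AEStronglyMeasurable.inner aestronglyMeasurable_const hmeas
    have hbdd_h : ∀ z, ‖h z‖ ≤ ‖g z‖ := by
      intro z
      calc ‖h z‖ ≤ ‖e‖ * ‖g z‖ := norm_inner_le_norm e (g z)
        _ = ‖g z‖ := by rw [hnorme, one_mul]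
    have hbdd_hB : ∀ z, ‖h z‖ ≤ B := fun z => (hbdd_h z).trans (hbdd z)
    have hanal_h : ∀ k : ℤ, k < 0 → fourierCoeff h k = 0 := by
      intro k hk
      unfold fourierCoeff
      have hint : Integrable (fun z : AddCircle T => (fourier (-k) z : ℂ) • g z)
          haarAddCircle := by
        apply integrable_of_bound _ _ B
        · exact ((map_continuous (fourier (-k))).aestronglyMeasurable).smul hmeas
        · intro z
          rw [norm_smul, norm_fourier, one_mul]
          exact hbdd z
      show (∫ z, (fourier (-k) z : ℂ) • h z ∂(haarAddCircle : Measure (AddCircle T))) = 0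
      have step1 : (∫ z, (fourier (-k) z : ℂ) • h z ∂(haarAddCircle : Measure (AddCircle T)))
          = ∫ z, (inner ℂ e ((fourier (-k) z : ℂ) • g z) : ℂ)
              ∂(haarAddCircle : Measure (AddCircle T)) := by
        apply integral_congr_ae
        apply Filter.Eventually.of_forall
        intro z
        show (fourier (-k) z : ℂ) • h z = (inner ℂ e ((fourier (-k) z : ℂ) • g z) : ℂ)
        rw [inner_smul_right, smul_eq_mul]
      rw [step1, integral_inner hint e, hanal k hk, inner_zero_right]
    have hinte : ∫ z, h z ∂(haarAddCircle : Measure (AddCircle T)) = (‖I‖ : ℂ) := by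
      rw [hh]
      rw [integral_inner hgint e, ← hI, he, inner_smul_left, inner_self_eq_norm_sq_to_K]
      rw [map_inv₀, Complex.conj_ofReal]
      have : ((‖I‖ : ℂ)) ≠ 0 := by exact_mod_cast hnormI
      field_simp
      rfl
    have hkey := scalar_hardy h hmeas_h B hbdd_hB hanal_h hp hp1.le
    rw [hinte] at hkey
    have hnormc : ‖((‖I‖ : ℝ) : ℂ)‖ = ‖I‖ := by
      rw [Complex.norm_real, Real.norm_eq_abs, _root_.abs_of_nonneg (norm_nonneg I)]
    rw [hnormc] at hkey
    have Ih : Integrable (fun z : AddCircle T => ‖h z‖ ^ p) haarAddCircle := by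
      apply integrable_of_bound _ _ (B ^ p)
      · exact hrp.comp_aestronglyMeasurable hmeas_h.norm
      · intro z
        rw [Real.norm_eq_abs, _root_.abs_of_nonneg (Real.rpow_nonneg (norm_nonneg _) p)]
        exact Real.rpow_le_rpow (norm_nonneg _) (hbdd_hB z) hp.le
    calc ‖I‖ ^ p ≤ ∫ z : AddCircle T, ‖h z‖ ^ p ∂haarAddCircle := hkey
      _ ≤ ∫ z : AddCircle T, ‖g z‖ ^ p ∂haarAddCircle := by
          apply integral_mono Ih Ig
          intro z
          exact Real.rpow_le_rpow (norm_nonneg _) (hbdd_h z) hp.le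


end HardyAux

/-- Let `(fₙ)` be a Hardy martingale on `Ω = 𝕋^ℕ` with values in a Hilbert space, for the
coordinate filtration: `fₙ` depends only on the first `n` coordinates, is bounded and
measurable, satisfies the martingale property (integrating out the last coordinate recovers
`f_{n-1}`), and each `fₙ` is analytic in its last coordinate (negative Fourier coefficients
vanish).  Then for any `p > 0` the sequence `(‖fₙ‖ᵖ)` is a submartingale; concretely, the
conditional expectation over the last coordinate dominates `‖f_{n-1}‖ᵖ` pointwise. -/
theorem hardy_martingale_submartingale
    {H : Type*} [NormedAddCommGroup H] [InnerProductSpace ℂ H] [CompleteSpace H]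
    (f : ℕ → (ℕ → AddCircle (2 * Real.pi)) → H)
    (h_adapted : ∀ (n : ℕ) (ω ω' : ℕ → AddCircle (2 * Real.pi)),
      (∀ i < n, ω i = ω' i) → f n ω = f n ω')
    (h_bdd : ∀ n : ℕ, ∃ B : ℝ, ∀ ω, ‖f n ω‖ ≤ B)
    (h_meas : ∀ (n : ℕ) (ω : ℕ → AddCircle (2 * Real.pi)),
      AEStronglyMeasurable (fun z => f (n + 1) (Function.update ω n z))
        AddCircle.haarAddCircle)
    (h_mart : ∀ (n : ℕ) (ω : ℕ → AddCircle (2 * Real.pi)),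
      ∫ z, f (n + 1) (Function.update ω n z) ∂AddCircle.haarAddCircle = f n ω)
    (h_analytic : ∀ (n : ℕ) (ω : ℕ → AddCircle (2 * Real.pi)) (k : ℤ), k < 0 →
      ∫ z, fourier (-k) z • f (n + 1) (Function.update ω n z) ∂AddCircle.haarAddCircle = 0)
    (p : ℝ) (hp : 0 < p) :
    ∀ (n : ℕ) (ω : ℕ → AddCircle (2 * Real.pi)),
      ‖f n ω‖ ^ p ≤
        ∫ z, ‖f (n + 1) (Function.update ω n z)‖ ^ p ∂AddCircle.haarAddCircle := by
  intro n ω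
  obtain ⟨B, hB⟩ := h_bdd (n + 1)
  have key := HardyAux.hilbert_hardy (T := 2 * Real.pi)
    (fun z => f (n + 1) (Function.update ω n z)) (h_meas n ω) B
    (fun z => hB _) (fun k hk => h_analytic n ω k hk) hp
  rw [h_mart n ω] at key
  exact key
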